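/- arXiv:2404.08173 — 2 statements merged into one kernel-verified Lean document; each statement's English description precedes it below -/
import Mathlib

section
/- Let A be the adjacency matrix of a graph G with no negative cycles, and let M be the matrix obtained by applying the relaxation A[i,j] ← min(A[i,j], A[i,k] + A[k,j]) for each tuple (i,j,k) of a sequence T in order. Then for every pair (i,j), M[i,j] equals the minimum over all paths from i to j realized by T of the path's total weight (with M[i,j] = A[i,j] if only trivial paths are realized). -/
/-- The sequence `T_ijk(n)`: element at position `a·n² + b·n + c` is `(a+1, b+1, c+1)`. -/
def Tijk (n : ℕ) : List (ℕ × ℕ × ℕ) :=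
  (List.range n).flatMap fun a => (List.range n).flatMap fun b =>
    (List.range n).map fun c => (a + 1, b + 1, c + 1)

/-- The sequence `T_kij(n)`: element at position `a·n² + b·n + c` is `(b+1, c+1, a+1)`. -/
def Tkij (n : ℕ) : List (ℕ × ℕ × ℕ) :=
  (List.range n).flatMap fun a => (List.range n).flatMap fun b =>
    (List.range n).map fun c => (b + 1, c + 1, a + 1)

/-- `T_ijk(n, i, j)`: the prefix of `T_ijk(n)` up to and including the tuple `(i, j, n)`. -/
def TijkPrefix (n i j : ℕ) : List (ℕ × ℕ × ℕ) :=
  (Tijk n).take ((i - 1) * n ^ 2 + (j - 1) * n + n)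

/-- A path `P` (a list of vertices) is realized by a sequence `T` of 3-tuples:
either it has at most one edge, or some position `d` of `T` holds the tuple
`(first, last, split vertex p_x)` with both halves realized by the length-`d` prefix
(`d` here is 0-indexed, so `T.take d` is the prefix strictly before position `d`). -/
inductive Realized : List (ℕ × ℕ × ℕ) → List ℕ → Prop
  | base (T : List (ℕ × ℕ × ℕ)) (P : List ℕ) (h : P.length ≤ 2) : Realized T P
  | step (T : List (ℕ × ℕ × ℕ)) (P : List ℕ) (d x : ℕ)
      (hd : d < T.length) (hx1 : 1 ≤ x) (hx2 : x ≤ P.length - 2)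
      (ht : T.getD d default = (P.getD 0 0, P.getD (P.length - 1) 0, P.getD x 0))
      (h1 : Realized (T.take d) (P.take (x + 1)))
      (h2 : Realized (T.take d) (P.drop x)) : Realized T P

/-- A path with at least one edge, all of whose vertices lie in `[1, n]`. -/
def ValidPath (n : ℕ) (P : List ℕ) : Prop :=
  2 ≤ P.length ∧ ∀ v ∈ P, 1 ≤ v ∧ v ≤ n

/-- Increasing path. -/
def Increasing (P : List ℕ) : Prop := P.Chain' (· < ·)

/-- Decreasing path. -/
def Decreasing (P : List ℕ) : Prop := P.Chain' (· > ·)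

/-- Valley path: every interior vertex is at most the min of the endpoints. -/
def Valley (P : List ℕ) : Prop :=
  ∀ t, 1 ≤ t → t ≤ P.length - 2 →
    P.getD t 0 ≤ min (P.getD 0 0) (P.getD (P.length - 1) 0)

/-- Proper path: no two consecutive vertices `p_t, p_{t+1}` with `1 ≤ t ≤ k-2`
both exceed the min of the endpoints. -/
def Proper (P : List ℕ) : Prop :=
  ¬ ∃ t, 1 ≤ t ∧ t ≤ P.length - 3 ∧
    min (P.getD 0 0) (P.getD (P.length - 1) 0) < P.getD t 0 ∧
    min (P.getD 0 0) (P.getD (P.length - 1) 0) < P.getD (t + 1) 0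

/-- Total weight of a path: the sum of the weights of its consecutive edges. -/
def pathWeight (W : ℕ → ℕ → WithTop ℤ) (P : List ℕ) : WithTop ℤ :=
  ((P.zip P.tail).map fun q => W q.1 q.2).sum

/-- One relaxation step `A[i,j] ← min(A[i,j], A[i,k] + A[k,j])` for the tuple `(i,j,k)`. -/
def relaxStep (A : ℕ → ℕ → WithTop ℤ) (t : ℕ × ℕ × ℕ) : ℕ → ℕ → WithTop ℤ :=
  fun i j => if i = t.1 ∧ j = t.2.1 then min (A i j) (A i t.2.2 + A t.2.2 j) else A i j

/-- Apply the relaxation steps of the sequence `T` in order, starting from `A`. -/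
def relaxAll (A : ℕ → ℕ → WithTop ℤ) (T : List (ℕ × ℕ × ℕ)) : ℕ → ℕ → WithTop ℤ :=
  T.foldl relaxStep A

/-- No negative cycles on the vertex set `[1, n]`. -/
def NoNegCycle (n : ℕ) (W : ℕ → ℕ → WithTop ℤ) : Prop :=
  ∀ P : List ℕ, 2 ≤ P.length → (∀ v ∈ P, 1 ≤ v ∧ v ≤ n) →
    P.getD 0 0 = P.getD (P.length - 1) 0 → 0 ≤ pathWeight W P

variable {W A : ℕ → ℕ → WithTop ℤ}

lemma pathWeight_nil : pathWeight W [] = 0 := rfl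
lemma pathWeight_single (a : ℕ) : pathWeight W [a] = 0 := rfl
lemma pathWeight_cons_cons (a b : ℕ) (l : List ℕ) :
    pathWeight W (a :: b :: l) = W a b + pathWeight W (b :: l) := rfl

lemma pathWeight_split (W : ℕ → ℕ → WithTop ℤ) :
    ∀ (P : List ℕ) (x : ℕ), x < P.length →
      pathWeight W P = pathWeight W (P.take (x + 1)) + pathWeight W (P.drop x) := by
  intro P
  induction P with
  | nil => intro x hx; simp at hx
  | cons a P ih =>
    intro x hx
    match x with
    | 0 => simp [pathWeight_single, pathWeight]
    | Nat.succ x =>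
      simp only [List.length_cons, Nat.succ_lt_succ_iff] at hx
      have hP : P ≠ [] := by intro h; subst h; simp at hx
      obtain ⟨b, l, rfl⟩ := List.exists_cons_of_ne_nil hP
      have htk : (b :: l).take (x + 1) = b :: l.take x := rfl
      match x with
      | 0 => simp [pathWeight_cons_cons, pathWeight_single, pathWeight]
      | Nat.succ x =>
        have := ih (x + 1) hx
        simp only [List.take_cons, List.drop_succ_cons, List.take_succ_cons] at *
        rw [pathWeight_cons_cons, pathWeight_cons_cons, this, add_assoc]

lemma relaxStep_le (t : ℕ × ℕ × ℕ) (i j : ℕ) : relaxStep A t i j ≤ A i j := by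
  unfold relaxStep
  split
  · exact min_le_left _ _
  · exact le_refl _

lemma relaxAll_le : ∀ (T : List (ℕ × ℕ × ℕ)) (A : ℕ → ℕ → WithTop ℤ) (i j : ℕ),
    relaxAll A T i j ≤ A i j := by
  intro T
  induction T with
  | nil => intro A i j; exact le_refl _
  | cons t T ih =>
    intro A i j
    calc relaxAll A (t :: T) i j = relaxAll (relaxStep A t) T i j := rfl
    _ ≤ relaxStep A t i j := ih _ i j
    _ ≤ A i j := relaxStep_le t i j

lemma relaxAll_append (T₁ T₂ : List (ℕ × ℕ × ℕ)) :
    relaxAll A (T₁ ++ T₂) = relaxAll (relaxAll A T₁) T₂ :=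
  List.foldl_append ..

lemma relaxAll_take_le (T : List (ℕ × ℕ × ℕ)) (d i j : ℕ) :
    relaxAll A T i j ≤ relaxAll A (T.take d) i j := by
  conv_lhs => rw [← List.take_append_drop d T]
  rw [relaxAll_append]
  exact relaxAll_le _ _ i j

lemma Realized.append {T : List (ℕ × ℕ × ℕ)} {P : List ℕ} (h : Realized T P)
    (T' : List (ℕ × ℕ × ℕ)) : Realized (T ++ T') P := by
  induction h with
  | base T P h => exact Realized.base _ _ h
  | step T P d x hd hx1 hx2 ht h1 h2 ih1 ih2 =>
    refine Realized.step _ _ d x ?_ hx1 hx2 ?_ ?_ ?_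
    · simp only [List.length_append]; omega
    · rwa [List.getD_eq_getElem _ _ (by simp only [List.length_append]; omega),
        List.getElem_append_left hd, ← List.getD_eq_getElem _ _ hd]
    · rwa [List.take_append_of_le_length (le_of_lt hd)]
    · rwa [List.take_append_of_le_length (le_of_lt hd)]


lemma getD_take' (P : List ℕ) (m t : ℕ) (h : t < m) : (P.take m).getD t 0 = P.getD t 0 := by
  simp [List.getD_eq_getElem?_getD, List.getElem?_take, h]

lemma getD_drop' (P : List ℕ) (m t : ℕ) : (P.drop m).getD t 0 = P.getD (m + t) 0 := by
  simp [List.getD_eq_getElem?_getD, List.getElem?_drop]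

lemma lower_bound (A : ℕ → ℕ → WithTop ℤ) (hA : ∀ i, A i i = 0)
    {T : List (ℕ × ℕ × ℕ)} {P : List ℕ} (h : Realized T P) :
    relaxAll A T (P.getD 0 0) (P.getD (P.length - 1) 0) ≤ pathWeight A P := by
  induction h with
  | base T P h =>
    match P with
    | [] => simpa [pathWeight_nil] using (relaxAll_le T A 0 0).trans (le_of_eq (hA 0))
    | [a] => simpa [pathWeight_single] using (relaxAll_le T A a a).trans (le_of_eq (hA a))
    | [a, b] =>
      simpa [pathWeight_cons_cons, pathWeight_single] using relaxAll_le T A a b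
    | a :: b :: c :: l => simp at h
  | step T P d x hd hx1 hx2 ht h1 h2 ih1 ih2 =>
    have hlen : 3 ≤ P.length := by
      rcases P with _ | ⟨a, _ | ⟨b, _ | ⟨c, l⟩⟩⟩ <;> simp_all <;> omega
    have hxlt : x < P.length := by omega
    -- endpoints of the two halves
    have e1 : (P.take (x + 1)).getD 0 0 = P.getD 0 0 := getD_take' P (x+1) 0 (by omega)
    have ltk : (P.take (x + 1)).length = x + 1 := by simp; omega
    have e2 : (P.take (x + 1)).getD ((P.take (x+1)).length - 1) 0 = P.getD x 0 := by
      rw [ltk, Nat.add_sub_cancel]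
      exact getD_take' P (x+1) x (by omega)
    have e3 : (P.drop x).getD 0 0 = P.getD x 0 := by
      simpa using getD_drop' P x 0
    have e4 : (P.drop x).getD ((P.drop x).length - 1) 0 = P.getD (P.length - 1) 0 := by
      rw [List.length_drop, getD_drop']
      congr 1
      omega
    rw [e1, e2] at ih1
    rw [e3, e4] at ih2
    set i := P.getD 0 0
    set j := P.getD (P.length - 1) 0
    set k := P.getD x 0
    have hstep : relaxAll A (T.take (d+1)) i j ≤
        relaxAll A (T.take d) i k + relaxAll A (T.take d) k j := by
      have : T.take (d + 1) = T.take d ++ [T.getD d default] := by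
        rw [List.take_succ, List.getElem?_eq_getElem hd, List.getD_eq_getElem T default hd]
        rfl
      rw [this, relaxAll_append]
      have : relaxAll (relaxAll A (T.take d)) [T.getD d default] i j =
          relaxStep (relaxAll A (T.take d)) (T.getD d default) i j := rfl
      rw [this, ht]
      have heq : relaxStep (relaxAll A (T.take d)) (i, j, k) i j =
          min (relaxAll A (T.take d) i j)
            (relaxAll A (T.take d) i k + relaxAll A (T.take d) k j) := if_pos ⟨rfl, rfl⟩
      rw [heq]
      exact min_le_right _ _
    calc relaxAll A T i j ≤ relaxAll A (T.take (d+1)) i j := relaxAll_take_le T _ i j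
      _ ≤ relaxAll A (T.take d) i k + relaxAll A (T.take d) k j := hstep
      _ ≤ pathWeight A (P.take (x+1)) + pathWeight A (P.drop x) := add_le_add ih1 ih2
      _ = pathWeight A P := (pathWeight_split A P x hxlt).symm

lemma member (n : ℕ) (A : ℕ → ℕ → WithTop ℤ) (T : List (ℕ × ℕ × ℕ))
    (hT : ∀ t ∈ T, 1 ≤ t.1 ∧ t.1 ≤ n ∧ 1 ≤ t.2.1 ∧ t.2.1 ≤ n ∧ 1 ≤ t.2.2 ∧ t.2.2 ≤ n) :
    ∀ i j, 1 ≤ i → i ≤ n → 1 ≤ j → j ≤ n →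
    ∃ P : List ℕ, P ≠ [] ∧ (∀ v ∈ P, 1 ≤ v ∧ v ≤ n) ∧
      P.getD 0 0 = i ∧ P.getD (P.length - 1) 0 = j ∧ Realized T P ∧
      pathWeight A P = relaxAll A T i j := by
  induction T using List.reverseRecOn with
  | nil =>
    intro i j hi1 hin hj1 hjn
    refine ⟨[i, j], by simp, ?_, rfl, rfl, Realized.base _ _ (by simp), ?_⟩
    · intro v hv
      simp only [List.mem_cons, List.mem_singleton, List.not_mem_nil, or_false] at hv
      rcases hv with rfl | rfl
      · exact ⟨hi1, hin⟩
      · exact ⟨hj1, hjn⟩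
    · show A i j + 0 = A i j
      rw [add_zero]
  | append_singleton T t ih =>
    have hT' : ∀ s ∈ T, 1 ≤ s.1 ∧ s.1 ≤ n ∧ 1 ≤ s.2.1 ∧ s.2.1 ≤ n ∧ 1 ≤ s.2.2 ∧ s.2.2 ≤ n :=
      fun s hs => hT s (by simp [hs])
    have IH := ih hT'
    intro i j hi1 hin hj1 hjn
    have hrel : relaxAll A (T ++ [t]) = relaxStep (relaxAll A T) t := relaxAll_append T [t]
    set M := relaxAll A T with hM
    by_cases hij : i = t.1 ∧ j = t.2.1
    case neg =>
      obtain ⟨P, h1, h2, h3, h4, h5, h6⟩ := IH i j hi1 hin hj1 hjn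
      refine ⟨P, h1, h2, h3, h4, h5.append [t], ?_⟩
      rw [hrel]
      have hst : relaxStep M t i j = M i j := if_neg hij
      rw [hst]
      exact h6
    case pos =>
      obtain ⟨rfl, rfl⟩ := hij
      obtain ⟨-, -, -, -, hk1, hkn⟩ := hT t (by simp)
      set k := t.2.2 with hkdef
      have hstep : relaxAll A (T ++ [t]) t.1 t.2.1 = min (M t.1 t.2.1) (M t.1 k + M k t.2.1) := by
        rw [hrel]; exact if_pos ⟨rfl, rfl⟩
      by_cases hmin : M t.1 t.2.1 ≤ M t.1 k + M k t.2.1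
      case pos =>
        obtain ⟨P, h1, h2, h3, h4, h5, h6⟩ := IH t.1 t.2.1 hi1 hin hj1 hjn
        refine ⟨P, h1, h2, h3, h4, h5.append [t], ?_⟩
        rw [hstep, min_eq_left hmin]
        exact h6
      case neg =>
        push_neg at hmin
        obtain ⟨P1, hP1ne, hP1mem, hP1a, hP1b, hP1r, hP1w⟩ := IH t.1 k hi1 hin hk1 hkn
        obtain ⟨P2, hP2ne, hP2mem, hP2a, hP2b, hP2r, hP2w⟩ := IH k t.2.1 hk1 hkn hj1 hjn
        have hl1 : 2 ≤ P1.length := by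
          by_contra hcon
          have h1 : P1.length = 1 := by
            have := List.length_pos_iff.mpr hP1ne; omega
          obtain ⟨v, rfl⟩ := List.length_eq_one_iff.mp h1
          simp only [List.length_cons, List.length_nil, Nat.sub_self] at hP1a hP1b
          have hik : t.1 = k := by rw [← hP1a, ← hP1b]
          have hz : pathWeight A [v] = 0 := pathWeight_single v
          rw [hP1w] at hz
          rw [hz, zero_add, ← hik] at hmin
          exact lt_irrefl _ hmin
        have hl2 : 2 ≤ P2.length := by
          by_contra hcon
          have h1 : P2.length = 1 := by
            have := List.length_pos_iff.mpr hP2ne; omega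
          obtain ⟨v, rfl⟩ := List.length_eq_one_iff.mp h1
          simp only [List.length_cons, List.length_nil, Nat.sub_self] at hP2a hP2b
          have hik : k = t.2.1 := by rw [← hP2a, ← hP2b]
          have hz : pathWeight A [v] = 0 := pathWeight_single v
          rw [hP2w] at hz
          rw [hz, add_zero, hik] at hmin
          exact lt_irrefl _ hmin
        obtain ⟨c, P2', rfl⟩ := List.exists_cons_of_ne_nil hP2ne
        have hck : c = k := by simpa using hP2a
        subst hck
        have hP2'len : 1 ≤ P2'.length := by
          simp only [List.length_cons] at hl2; omega
        set P : List ℕ := P1 ++ P2' with hPdef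
        set x : ℕ := P1.length - 1 with hxdef
        have hxP1 : x + 1 = P1.length := by omega
        have hPlen : P.length = P1.length + P2'.length := by
          rw [hPdef, List.length_append]
        -- take and drop facts
        have htake : P.take (x + 1) = P1 := by
          rw [hxP1, hPdef]; exact List.take_left
        have hdrop : P.drop x = k :: P2' := by
          rw [hPdef, List.drop_append_of_le_length (by omega)]
          have hnil : P1.drop (x + 1) = [] := by
            rw [hxP1]; exact List.drop_length
          have hdr : P1.drop x = [k] := by
            rw [List.drop_eq_getElem_cons (by omega : x < P1.length), hnil]
            congr 1
            rw [← List.getD_eq_getElem P1 0 (by omega : x < P1.length)]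
            exact hP1b
          rw [hdr]; rfl
        -- getD facts for P
        have hgd0 : P.getD 0 0 = t.1 := by
          have h := getD_take' P (x + 1) 0 (by omega)
          rw [htake] at h
          rw [← h]; exact hP1a
        have hgdx : P.getD x 0 = k := by
          have h := getD_take' P (x + 1) x (by omega)
          rw [htake] at h
          rw [← h]; exact hP1b
        have hgdlast : P.getD (P.length - 1) 0 = t.2.1 := by
          have h := getD_drop' P x P2'.length
          rw [hdrop] at h
          rw [show x + P2'.length = P.length - 1 from by omega] at h
          rw [← h]
          simpa using hP2b
        have hreal : Realized (T ++ [t]) P := by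
          refine Realized.step _ _ T.length x (by simp) (by omega) (by omega) ?_ ?_ ?_
          · rw [hgd0, hgdx, hgdlast, List.getD_eq_getElem _ _ (by simp)]
            simp [hkdef]
          · rw [show (T ++ [t]).take T.length = T from List.take_left, htake]
            exact hP1r
          · rw [show (T ++ [t]).take T.length = T from List.take_left, hdrop]
            exact hP2r
        refine ⟨P, by simp [hPdef, hP1ne], ?_, hgd0, hgdlast, hreal, ?_⟩
        · intro v hv
          rcases List.mem_append.mp hv with h | h
          · exact hP1mem v h
          · exact hP2mem v (List.mem_cons_of_mem _ h)
        · rw [hstep, min_eq_right (le_of_lt hmin)]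
          rw [pathWeight_split A P x (by omega), htake, hdrop, hP1w, hP2w]

/-- Relaxation–realization correspondence: after applying the relaxations of a
sequence `T` (whose tuples have entries in `[1,n]`) to the adjacency matrix of a
graph with no negative cycles, each entry `(i,j)` is the minimum total weight over
all paths from `i` to `j` realized by `T`. -/
theorem stmt14 (n : ℕ) (A : ℕ → ℕ → WithTop ℤ) (hA : ∀ i, A i i = 0)
    (hcyc : NoNegCycle n A) (T : List (ℕ × ℕ × ℕ))
    (hT : ∀ t ∈ T, 1 ≤ t.1 ∧ t.1 ≤ n ∧ 1 ≤ t.2.1 ∧ t.2.1 ≤ n ∧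
      1 ≤ t.2.2 ∧ t.2.2 ≤ n)
    (i j : ℕ) (hi1 : 1 ≤ i) (hin : i ≤ n) (hj1 : 1 ≤ j) (hjn : j ≤ n) :
    IsLeast {c | ∃ P : List ℕ, P ≠ [] ∧ (∀ v ∈ P, 1 ≤ v ∧ v ≤ n) ∧
        P.getD 0 0 = i ∧ P.getD (P.length - 1) 0 = j ∧ Realized T P ∧
        pathWeight A P = c}
      (relaxAll A T i j) := by
  constructor
  · obtain ⟨P, h1, h2, h3, h4, h5, h6⟩ := member n A T hT i j hi1 hin hj1 hjn
    exact ⟨P, h1, h2, h3, h4, h5, h6⟩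
  · rintro c ⟨P, h1, h2, h3, h4, h5, rfl⟩
    have hlb := lower_bound A hA h5
    rwa [h3, h4] at hlb
end

section
/- Every increasing path and every decreasing path on vertex set [1,n] is realized by T_{ijk}(n). -/
section Helpers

set_option linter.deprecated false

lemma myBindLength {α : Type*} (g : ℕ → List α) (m : ℕ) (hg : ∀ i, (g i).length = m) :
    ∀ k, ((List.range k).flatMap g).length = k * m := by
  intro k
  induction k with
  | zero => simp
  | succ k ih =>
    rw [List.range_succ, List.flatMap_append, List.length_append, ih]
    simp [hg, Nat.succ_mul]

lemma myBindGetD {α : Type*} [Inhabited α] (g : ℕ → List α) (m : ℕ)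
    (hg : ∀ i, (g i).length = m) :
    ∀ (k a r : ℕ), a < k → r < m →
      ((List.range k).flatMap g).getD (a * m + r) default = (g a).getD r default := by
  intro k
  induction k with
  | zero => intro a r ha _; omega
  | succ k ih =>
    intro a r ha hr
    rw [List.range_succ, List.flatMap_append]
    rcases Nat.lt_or_ge a k with h | h
    · rw [List.getD_append]
      · exact ih a r h hr
      · rw [myBindLength g m hg]
        calc a * m + r < a * m + m := by omega
          _ = (a + 1) * m := by ring
          _ ≤ k * m := Nat.mul_le_mul_right m (by omega)
    · have haa : a = k := by omega
      subst haa
      have e : [a].flatMap g = g a := by simp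
      have hl : ((List.range a).flatMap g).length = a * m := myBindLength g m hg a
      rw [e, List.getD_append_right _ _ _ _ (by rw [hl]; omega), hl]
      congr 1
      omega

lemma myGetDTake {α : Type*} (l : List α) (m i : ℕ) (d : α) (h : i < m) :
    (l.take m).getD i d = l.getD i d := by
  rcases Nat.lt_or_ge i l.length with hi | hi
  · rw [List.getD_eq_getElem _ _ (by simp [hi]; omega), List.getD_eq_getElem _ _ hi,
      List.getElem_take]
  · rw [List.getD_eq_default _ _ (by simp; omega), List.getD_eq_default _ _ hi]

end Helpers

section Aux

lemma myMulPred {x y : ℕ} (hx : 1 ≤ x) : x * y = (x - 1) * y + y := by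
  have h : x = (x - 1) + 1 := by omega
  calc x * y = ((x - 1) + 1) * y := by rw [← h]
    _ = (x - 1) * y + y := by ring

lemma myCubeBound {n a b c : ℕ} (ha1 : 1 ≤ a) (ha : a ≤ n) (hb1 : 1 ≤ b) (hb : b ≤ n)
    (hc1 : 1 ≤ c) (hc : c ≤ n) :
    (a - 1) * n ^ 2 + ((b - 1) * n + (c - 1)) < n * n ^ 2 := by
  obtain ⟨a', rfl⟩ : ∃ a', a = a' + 1 := ⟨a - 1, by omega⟩
  obtain ⟨b', rfl⟩ : ∃ b', b = b' + 1 := ⟨b - 1, by omega⟩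
  obtain ⟨c', rfl⟩ : ∃ c', c = c' + 1 := ⟨c - 1, by omega⟩
  obtain ⟨k, rfl⟩ : ∃ k, n = k + 1 := ⟨n - 1, by omega⟩
  simp only [Nat.add_sub_cancel]
  nlinarith [mul_le_mul_left (show a' ≤ k by omega) ((k + 1) ^ 2),
    mul_le_mul_left (show b' ≤ k by omega) (k + 1)]

lemma myBound1 {n a b c : ℕ} (hb1 : 1 ≤ b) (hc1 : 1 ≤ c) (hc : c ≤ n) :
    (a - 1) * n ^ 2 + ((b - 1) * n + (c - 1)) < (a - 1) * n ^ 2 + b * n := by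
  apply Nat.add_lt_add_left
  have h := myMulPred (y := n) hb1
  have hcn : c - 1 < n := by omega
  linarith

lemma myBound2 {n a b c : ℕ} (hc1 : 1 ≤ c) (hcb : c < b) :
    (a - 1) * n ^ 2 + c * n ≤ (a - 1) * n ^ 2 + ((b - 1) * n + (c - 1)) := by
  apply Nat.add_le_add_left
  have h : c * n ≤ (b - 1) * n := mul_le_mul_left (by omega) n
  omega

lemma myBound3 {n a b c : ℕ} (ha1 : 1 ≤ a) (hb1 : 1 ≤ b) (hb : b ≤ n)
    (hc1 : 1 ≤ c) (hc : c ≤ n) :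
    (a - 1) * n ^ 2 + ((b - 1) * n + (c - 1)) < a * n ^ 2 := by
  have h1 : (b - 1) * n + (c - 1) < n ^ 2 := by
    have h2 : (b - 1) * n ≤ (n - 1) * n := mul_le_mul_left (by omega) n
    have h3 : (n - 1) * n + n = n * n := (myMulPred (by omega)).symm
    have h4 : n ^ 2 = n * n := sq n
    omega
  have h5 := myMulPred (y := n ^ 2) ha1
  omega

lemma Tijk_flatMap (n : ℕ) : Tijk n =
    (List.range n).flatMap fun a => (List.range n).flatMap fun b =>
      (List.range n).map fun c => (a + 1, b + 1, c + 1) := rfl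

lemma Tijk_length (n : ℕ) : (Tijk n).length = n * n ^ 2 := by
  rw [Tijk_flatMap]
  exact myBindLength _ _ (fun a => by
    rw [myBindLength _ n (fun b => by simp)]; exact (sq n).symm) n

lemma Tijk_getD (n a b c : ℕ) (ha : a < n) (hb : b < n) (hc : c < n) :
    (Tijk n).getD (a * n ^ 2 + (b * n + c)) default = (a + 1, b + 1, c + 1) := by
  rw [Tijk_flatMap]
  have hbc : b * n + c < n ^ 2 := by
    have h1 : b * n ≤ (n - 1) * n := mul_le_mul_left (by omega) n
    have h2 : (n - 1) * n + n = n * n := (myMulPred (by omega)).symm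
    have h3 : n ^ 2 = n * n := sq n
    omega
  rw [myBindGetD _ (n ^ 2) (fun i => by
    rw [myBindLength _ n (fun b => by simp)]; exact (sq n).symm) n a _ ha hbc]
  rw [myBindGetD _ n (fun b => by simp) n b c hb hc]
  rw [List.getD_eq_getElem _ _ (by simpa using hc)]
  simp

lemma Realized_mono : ∀ {T T' : List (ℕ × ℕ × ℕ)} {P : List ℕ},
    Realized T P → T <+: T' → Realized T' P := by
  intro T T' P h hp
  obtain ⟨s, rfl⟩ := hp
  cases h with
  | base _ _ h => exact .base _ _ h
  | step _ _ d x hd hx1 hx2 ht h1 h2 =>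
    refine .step _ _ d x (hd.trans_le (by simp)) hx1 hx2 ?_ ?_ ?_
    · rw [List.getD_append _ _ _ _ hd]; exact ht
    · rw [List.take_append_of_le_length hd.le]; exact h1
    · rw [List.take_append_of_le_length hd.le]; exact h2

lemma Realized_mono_take {T : List (ℕ × ℕ × ℕ)} {P : List ℕ} {m m' : ℕ}
    (h : m ≤ m') (hr : Realized (T.take m) P) : Realized (T.take m') P := by
  apply Realized_mono hr
  rw [show T.take m = (T.take m').take m by rw [List.take_take, min_eq_left h]]
  exact List.take_prefix _ _

lemma realized_inc (n : ℕ) : ∀ (m : ℕ) (P : List ℕ), P.length ≤ m →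
    (∀ v ∈ P, 1 ≤ v ∧ v ≤ n) → Increasing P →
    Realized ((Tijk n).take ((P.getD 0 0 - 1) * n ^ 2 + P.getD (P.length - 1) 0 * n)) P := by
  intro m
  induction m with
  | zero => intro P hm _ _; exact .base _ _ (by omega)
  | succ m ih =>
    intro P hm hv hinc
    rcases le_or_gt P.length 2 with hL | hL
    · exact .base _ _ hL
    set L := P.length with hLdef
    have hpw : P.Pairwise (· < ·) := List.isChain_iff_pairwise.mp hinc
    have hgl := List.pairwise_iff_getElem.mp hpw
    set a := P.getD 0 0 with hadef
    set b := P.getD (L - 1) 0 with hbdef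
    set c := P.getD (L - 2) 0 with hcdef
    have h0 : (0 : ℕ) < L := by omega
    have h1 : L - 2 < L := by omega
    have h2 : L - 1 < L := by omega
    have ea : a = P[0]'h0 := List.getD_eq_getElem _ _ h0
    have eb : b = P[L - 1]'h2 := List.getD_eq_getElem _ _ h2
    have ec : c = P[L - 2]'h1 := List.getD_eq_getElem _ _ h1
    have hac : a < c := by rw [ea, ec]; exact hgl 0 (L - 2) h0 h1 (by omega)
    have hcb : c < b := by rw [ec, eb]; exact hgl (L - 2) (L - 1) h1 h2 (by omega)
    have han : 1 ≤ a ∧ a ≤ n := hv _ (by rw [ea]; exact List.getElem_mem _)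
    have hbn : 1 ≤ b ∧ b ≤ n := hv _ (by rw [eb]; exact List.getElem_mem _)
    have hcn : 1 ≤ c ∧ c ≤ n := hv _ (by rw [ec]; exact List.getElem_mem _)
    set d := (a - 1) * n ^ 2 + ((b - 1) * n + (c - 1)) with hddef
    have hd1 : d < (a - 1) * n ^ 2 + b * n := myBound1 hbn.1 hcn.1 hcn.2
    have hd2 : d < n * n ^ 2 := myCubeBound han.1 han.2 hbn.1 hbn.2 hcn.1 hcn.2
    refine Realized.step _ P d (L - 2) ?_ (by omega) (by omega) ?_ ?_ ?_
    · rw [List.length_take, Tijk_length]; exact lt_min hd1 hd2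
    · rw [myGetDTake _ _ _ _ hd1, hddef, Tijk_getD n (a - 1) (b - 1) (c - 1)
        (by omega) (by omega) (by omega)]
      have e1 : a - 1 + 1 = a := by omega
      have e2 : b - 1 + 1 = b := by omega
      have e3 : c - 1 + 1 = c := by omega
      rw [e1, e2, e3]
    · rw [List.take_take, min_eq_left hd1.le]
      have e4 : L - 2 + 1 = L - 1 := by omega
      rw [e4]
      set Q := P.take (L - 1) with hQ
      have hQlen : Q.length = L - 1 := by rw [hQ, List.length_take]; omega
      have hQ0 : Q.getD 0 0 = a := by rw [hQ, myGetDTake _ _ _ _ (by omega)]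
      have hQlast : Q.getD (L - 2) 0 = c := by rw [hQ, myGetDTake _ _ _ _ (by omega)]
      have hIH := ih Q (by omega)
        (fun v hvq => hv v (List.mem_of_mem_take hvq))
        (hinc.prefix (List.take_prefix _ _))
      rw [hQlen, show L - 1 - 1 = L - 2 by omega, hQ0, hQlast] at hIH
      exact Realized_mono_take (myBound2 hcn.1 hcb) hIH
    · exact .base _ _ (by rw [List.length_drop]; omega)

lemma realized_dec (n : ℕ) : ∀ (m : ℕ) (P : List ℕ), P.length ≤ m →
    (∀ v ∈ P, 1 ≤ v ∧ v ≤ n) → Decreasing P →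
    Realized ((Tijk n).take (P.getD 0 0 * n ^ 2)) P := by
  intro m
  induction m with
  | zero => intro P hm _ _; exact .base _ _ (by omega)
  | succ m ih =>
    intro P hm hv hdec
    rcases le_or_gt P.length 2 with hL | hL
    · exact .base _ _ hL
    set L := P.length with hLdef
    have hpw : P.Pairwise (· > ·) := List.isChain_iff_pairwise.mp hdec
    have hgl := List.pairwise_iff_getElem.mp hpw
    set a := P.getD 0 0 with hadef
    set b := P.getD (L - 1) 0 with hbdef
    set c := P.getD 1 0 with hcdef
    have h0 : (0 : ℕ) < L := by omega
    have h1 : (1 : ℕ) < L := by omega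
    have h2 : L - 1 < L := by omega
    have ea : a = P[0]'h0 := List.getD_eq_getElem _ _ h0
    have eb : b = P[L - 1]'h2 := List.getD_eq_getElem _ _ h2
    have ec : c = P[1]'h1 := List.getD_eq_getElem _ _ h1
    have hca : c < a := by rw [ea, ec]; exact hgl 0 1 h0 h1 (by omega)
    have hbc : b < c := by rw [ec, eb]; exact hgl 1 (L - 1) h1 h2 (by omega)
    have han : 1 ≤ a ∧ a ≤ n := hv _ (by rw [ea]; exact List.getElem_mem _)
    have hbn : 1 ≤ b ∧ b ≤ n := hv _ (by rw [eb]; exact List.getElem_mem _)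
    have hcn : 1 ≤ c ∧ c ≤ n := hv _ (by rw [ec]; exact List.getElem_mem _)
    set d := (a - 1) * n ^ 2 + ((b - 1) * n + (c - 1)) with hddef
    have hd1 : d < a * n ^ 2 := myBound3 han.1 hbn.1 hbn.2 hcn.1 hcn.2
    have hd2 : d < n * n ^ 2 := myCubeBound han.1 han.2 hbn.1 hbn.2 hcn.1 hcn.2
    refine Realized.step _ P d 1 ?_ le_rfl (by omega) ?_ ?_ ?_
    · rw [List.length_take, Tijk_length]; exact lt_min hd1 hd2
    · rw [myGetDTake _ _ _ _ hd1, hddef, Tijk_getD n (a - 1) (b - 1) (c - 1)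
        (by omega) (by omega) (by omega)]
      have e1 : a - 1 + 1 = a := by omega
      have e2 : b - 1 + 1 = b := by omega
      have e3 : c - 1 + 1 = c := by omega
      rw [e1, e2, e3]
    · exact .base _ _ (by rw [List.length_take]; omega)
    · rw [List.take_take, min_eq_left hd1.le]
      set Q := P.drop 1 with hQ
      have hQ0 : Q.getD 0 0 = c := by
        rw [hQ, List.getD_eq_getElem _ _ (by rw [List.length_drop]; omega),
          List.getElem_drop, ec]
      have hIH := ih Q (by rw [hQ, List.length_drop]; omega)
        (fun v hvq => hv v (List.mem_of_mem_drop hvq))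
        (by rw [hQ, List.drop_one]; exact hdec.tail)
      rw [hQ0] at hIH
      have hle : c * n ^ 2 ≤ d := by
        have h3 : c * n ^ 2 ≤ (a - 1) * n ^ 2 := mul_le_mul_left (by omega) _
        omega
      exact Realized_mono_take hle hIH

end Aux


/-- Every increasing path and every decreasing path on `[1,n]` is realized by
`T_ijk(n)`. -/
theorem stmt17 (n : ℕ) (P : List ℕ) (hP : ValidPath n P)
    (h : Increasing P ∨ Decreasing P) : Realized (Tijk n) P := by
  obtain ⟨hlen, hv⟩ := hP
  rcases h with hinc | hdec
  · exact Realized_mono (realized_inc n P.length P le_rfl hv hinc) (List.take_prefix _ _)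
  · exact Realized_mono (realized_dec n P.length P le_rfl hv hdec) (List.take_prefix _ _)
end
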